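/- Let n ≥ 2 and let k be an integer with 1 ≤ k ≤ n−1. For each vertex v of 𝒫_{k,n}, writing A = {i : v_i = 1} and B = {i : v_i = 0}, define P_v(x) = (∏_{i∈A} x_i) · (∏_{i∈B} (1−x_i)) · (k − ∑_{i∈A} x_i). Then for every x ∈ 𝒫_{k,n}, the vector identity ∑_v P_v(x)·(v − x) = 0 holds in ℝ^n, where the sum is over all vertices v of 𝒫_{k,n}. The same identity holds when the factor (k − ∑_{i∈A} x_i) in P_v is replaced by ∑_{i∈B} x_i. -/
import Mathlib


open Finset

lemma key {ι : Type*} [DecidableEq ι] (S : Finset ι) (x : ι → ℝ) (k : ℕ) :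
    ∑ B ∈ S.powersetCard k,
        (∏ i ∈ B, x i) * (∏ i ∈ S \ B, (1 - x i)) * (∑ i ∈ S \ B, x i)
      = ∑ A ∈ S.powersetCard (k+1),
        (∏ i ∈ A, x i) * (∏ i ∈ S \ A, (1 - x i)) * (∑ i ∈ A, (1 - x i)) := by
  simp only [Finset.mul_sum]
  rw [Finset.sum_sigma', Finset.sum_sigma']
  refine Finset.sum_nbij' (fun p => ⟨insert p.2 p.1, p.2⟩) (fun p => ⟨p.1.erase p.2, p.2⟩)
    ?_ ?_ ?_ ?_ ?_
  · rintro ⟨B, i⟩ hp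
    simp only [Finset.mem_sigma, Finset.mem_powersetCard, Finset.mem_sdiff] at hp ⊢
    obtain ⟨⟨hBS, hBk⟩, hiS, hiB⟩ := hp
    refine ⟨⟨Finset.insert_subset hiS hBS, by rw [Finset.card_insert_of_notMem hiB, hBk]⟩,
      Finset.mem_insert_self _ _⟩
  · rintro ⟨A, i⟩ hp
    simp only [Finset.mem_sigma, Finset.mem_powersetCard, Finset.mem_sdiff] at hp ⊢
    obtain ⟨⟨hAS, hAk⟩, hiA⟩ := hp
    exact ⟨⟨(Finset.erase_subset _ _).trans hAS,
      by rw [Finset.card_erase_of_mem hiA, hAk]; rfl⟩, hAS hiA, Finset.notMem_erase _ _⟩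
  · rintro ⟨B, i⟩ hp
    simp only [Finset.mem_sigma, Finset.mem_powersetCard, Finset.mem_sdiff] at hp
    simp [Finset.erase_insert hp.2.2]
  · rintro ⟨A, i⟩ hp
    simp only [Finset.mem_sigma, Finset.mem_powersetCard, Finset.mem_sdiff] at hp
    simp [Finset.insert_erase hp.2]
  · rintro ⟨B, i⟩ hp
    simp only [Finset.mem_sigma, Finset.mem_powersetCard, Finset.mem_sdiff] at hp
    obtain ⟨⟨hBS, hBk⟩, hiS, hiB⟩ := hp
    have h1 : ∏ j ∈ insert i B, x j = x i * ∏ j ∈ B, x j := Finset.prod_insert hiB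
    have h2 : S \ insert i B = (S \ B).erase i := by
      ext a; simp [Finset.mem_sdiff, Finset.mem_erase, Finset.mem_insert]; tauto
    have h3 : ∏ j ∈ S \ B, (1 - x j) = (1 - x i) * ∏ j ∈ (S \ B).erase i, (1 - x j) :=
      (Finset.mul_prod_erase _ _ (Finset.mem_sdiff.2 ⟨hiS, hiB⟩)).symm
    show ((∏ j ∈ B, x j) * ∏ j ∈ S \ B, (1 - x j)) * x i
      = ((∏ j ∈ insert i B, x j) * ∏ j ∈ S \ insert i B, (1 - x j)) * (1 - x i)
    rw [h1, h2, h3]; ring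

/-- **The Sampford-sampling identities for the k-subset polytope.** Let
`1 ≤ k ≤ n − 1` with `n ≥ 2`. Identify each vertex of
`𝒫_{k,n} = {x ∈ [0,1]ⁿ : ∑ i, x i = k}` with the set `A` of its `k` coordinates
equal to `1` (its indicator vector being `i ↦ if i ∈ A then 1 else 0`), and set
`P_A(x) = (∏_{i∈A} x i) (∏_{i∉A} (1 − x i)) (k − ∑_{i∈A} x i)`. Then for every
`x ∈ 𝒫_{k,n}`, `∑_A P_A(x) · (v_A − x) = 0` in `ℝⁿ`, where the sum ranges over all
vertices; and the same identity holds when the factor `k − ∑_{i∈A} x i` is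
replaced by `∑_{i∉A} x i`. -/
theorem sampford_identities (n k : ℕ) (hn : 2 ≤ n) (hk1 : 1 ≤ k) (hk2 : k ≤ n - 1)
    (x : Fin n → ℝ) (hx01 : ∀ i, x i ∈ Set.Icc (0 : ℝ) 1)
    (hxsum : ∑ i, x i = (k : ℝ)) :
    (∑ A ∈ Finset.powersetCard k (Finset.univ : Finset (Fin n)),
        ((∏ i ∈ A, x i) * (∏ i ∈ Aᶜ, (1 - x i)) * ((k : ℝ) - ∑ i ∈ A, x i)) •
          ((fun i => if i ∈ A then (1 : ℝ) else 0) - x) = (0 : Fin n → ℝ)) ∧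
    (∑ A ∈ Finset.powersetCard k (Finset.univ : Finset (Fin n)),
        ((∏ i ∈ A, x i) * (∏ i ∈ Aᶜ, (1 - x i)) * (∑ i ∈ Aᶜ, x i)) •
          ((fun i => if i ∈ A then (1 : ℝ) else 0) - x) = (0 : Fin n → ℝ)) := by
  have hco : ∀ A : Finset (Fin n), ((k : ℝ) - ∑ i ∈ A, x i) = ∑ i ∈ Aᶜ, x i := by
    intro A
    have h := Finset.sum_add_sum_compl A x
    rw [hxsum] at h
    linarith
  have main : ∑ A ∈ Finset.powersetCard k (Finset.univ : Finset (Fin n)),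
      ((∏ i ∈ A, x i) * (∏ i ∈ Aᶜ, (1 - x i)) * (∑ i ∈ Aᶜ, x i)) •
        ((fun i => if i ∈ A then (1 : ℝ) else 0) - x) = (0 : Fin n → ℝ) := by
    funext j
    have hjS : j ∉ Finset.univ.erase j := Finset.notMem_erase _ _
    have hxjS : x j + ∑ i ∈ Finset.univ.erase j, x i = (k : ℝ) := by
      rw [← hxsum]; exact Finset.add_sum_erase _ x (Finset.mem_univ j)
    have hk' : k - 1 + 1 = k := Nat.sub_add_cancel hk1
    simp only [Finset.sum_apply, Pi.smul_apply, Pi.sub_apply, smul_eq_mul, Pi.zero_apply]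
    rw [← Finset.sum_filter_add_sum_filter_not (Finset.powersetCard k (Finset.univ : Finset (Fin n)))
      (fun A => j ∈ A)]
    have h1 : ∑ A ∈ (Finset.powersetCard k (Finset.univ : Finset (Fin n))).filter
          (fun A => j ∈ A),
        ((∏ i ∈ A, x i) * (∏ i ∈ Aᶜ, (1 - x i)) * (∑ i ∈ Aᶜ, x i)) *
          ((if j ∈ A then (1 : ℝ) else 0) - x j)
        = x j * (1 - x j) * ∑ B ∈ (Finset.univ.erase j).powersetCard (k - 1),
            (∏ i ∈ B, x i) * (∏ i ∈ Finset.univ.erase j \ B, (1 - x i)) *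
              (∑ i ∈ Finset.univ.erase j \ B, x i) := by
      rw [Finset.mul_sum]
      refine Finset.sum_nbij' (fun A => A.erase j) (fun B => insert j B) ?_ ?_ ?_ ?_ ?_
      · intro A hA
        simp only [Finset.mem_filter, Finset.mem_powersetCard] at hA
        obtain ⟨⟨-, hAk⟩, hjA⟩ := hA
        simp only [Finset.mem_powersetCard]
        exact ⟨Finset.erase_subset_erase _ (Finset.subset_univ A),
          by rw [Finset.card_erase_of_mem hjA, hAk]⟩
      · intro B hB
        simp only [Finset.mem_powersetCard] at hB
        obtain ⟨hBS, hBk⟩ := hB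
        have hjB : j ∉ B := fun h => hjS (hBS h)
        simp only [Finset.mem_filter, Finset.mem_powersetCard]
        exact ⟨⟨Finset.subset_univ _, by
          rw [Finset.card_insert_of_notMem hjB, hBk, hk']⟩, Finset.mem_insert_self _ _⟩
      · intro A hA
        simp only [Finset.mem_filter] at hA
        exact Finset.insert_erase hA.2
      · intro B hB
        simp only [Finset.mem_powersetCard] at hB
        exact Finset.erase_insert (fun h => hjS (hB.1 h))
      · intro A hA
        simp only [Finset.mem_filter, Finset.mem_powersetCard] at hA
        obtain ⟨⟨-, hAk⟩, hjA⟩ := hA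
        have hAc : Aᶜ = Finset.univ.erase j \ A.erase j := by
          ext a
          simp only [Finset.mem_compl, Finset.mem_sdiff, Finset.mem_erase,
            Finset.mem_univ, and_true]
          constructor
          · intro h; exact ⟨fun he => h (he ▸ hjA), fun hc => h hc.2⟩
          · intro h ha; exact h.2 ⟨h.1, ha⟩
        have hprod : ∏ i ∈ A, x i = x j * ∏ i ∈ A.erase j, x i :=
          (Finset.mul_prod_erase _ _ hjA).symm
        rw [if_pos hjA, hAc, hprod]
        ring
    have hfilt : (Finset.powersetCard k (Finset.univ : Finset (Fin n))).filter
        (fun A => ¬ j ∈ A) = (Finset.univ.erase j).powersetCard k := by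
      ext A
      simp only [Finset.mem_filter, Finset.mem_powersetCard, Finset.subset_erase,
        Finset.subset_univ, true_and]
      tauto
    have h2 : ∑ A ∈ (Finset.univ.erase j).powersetCard k,
        ((∏ i ∈ A, x i) * (∏ i ∈ Aᶜ, (1 - x i)) * (∑ i ∈ Aᶜ, x i)) *
          ((if j ∈ A then (1 : ℝ) else 0) - x j)
        = x j * (1 - x j) * ∑ A ∈ (Finset.univ.erase j).powersetCard k,
            -((∏ i ∈ A, x i) * (∏ i ∈ Finset.univ.erase j \ A, (1 - x i)) *
              (x j + ∑ i ∈ Finset.univ.erase j \ A, x i)) := by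
      rw [Finset.mul_sum]
      refine Finset.sum_congr rfl fun A hA => ?_
      simp only [Finset.mem_powersetCard] at hA
      obtain ⟨hAS, hAk⟩ := hA
      have hjA : j ∉ A := fun h => hjS (hAS h)
      have hjSA : j ∉ Finset.univ.erase j \ A := fun h => hjS (Finset.mem_sdiff.1 h).1
      have hAc : Aᶜ = insert j (Finset.univ.erase j \ A) := by
        ext a
        simp only [Finset.mem_compl, Finset.mem_insert, Finset.mem_sdiff, Finset.mem_erase,
          Finset.mem_univ, and_true]
        constructor
        · intro h
          by_cases haj : a = j
          · exact Or.inl haj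
          · exact Or.inr ⟨haj, h⟩
        · rintro (rfl | ⟨-, h⟩)
          · exact hjA
          · exact h
      rw [if_neg hjA, hAc, Finset.prod_insert hjSA, Finset.sum_insert hjSA]
      ring
    have h3 : ∑ B ∈ (Finset.univ.erase j).powersetCard (k - 1),
          (∏ i ∈ B, x i) * (∏ i ∈ Finset.univ.erase j \ B, (1 - x i)) *
            (∑ i ∈ Finset.univ.erase j \ B, x i)
        = ∑ A ∈ (Finset.univ.erase j).powersetCard k,
            (∏ i ∈ A, x i) * (∏ i ∈ Finset.univ.erase j \ A, (1 - x i)) *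
              (x j + ∑ i ∈ Finset.univ.erase j \ A, x i) := by
      rw [key (Finset.univ.erase j) x (k - 1), hk']
      refine Finset.sum_congr rfl fun A hA => ?_
      simp only [Finset.mem_powersetCard] at hA
      obtain ⟨hAS, hAk⟩ := hA
      have e1 : ∑ i ∈ A, (1 - x i) = (k : ℝ) - ∑ i ∈ A, x i := by
        rw [Finset.sum_sub_distrib, Finset.sum_const, hAk]
        simp
      have e2 : ∑ i ∈ Finset.univ.erase j \ A, x i
          = (∑ i ∈ Finset.univ.erase j, x i) - ∑ i ∈ A, x i :=
        Finset.sum_sdiff_eq_sub hAS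
      have hxj : x j = (k : ℝ) - ∑ i ∈ Finset.univ.erase j, x i := by linarith [hxjS]
      rw [e1, e2, hxj]
      ring
    rw [hfilt, h1, h2, h3, Finset.sum_neg_distrib]
    ring
  refine ⟨?_, main⟩
  rw [show (∑ A ∈ Finset.powersetCard k (Finset.univ : Finset (Fin n)),
      ((∏ i ∈ A, x i) * (∏ i ∈ Aᶜ, (1 - x i)) * ((k : ℝ) - ∑ i ∈ A, x i)) •
        ((fun i => if i ∈ A then (1 : ℝ) else 0) - x))
    = ∑ A ∈ Finset.powersetCard k (Finset.univ : Finset (Fin n)),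
      ((∏ i ∈ A, x i) * (∏ i ∈ Aᶜ, (1 - x i)) * (∑ i ∈ Aᶜ, x i)) •
        ((fun i => if i ∈ A then (1 : ℝ) else 0) - x)
    from Finset.sum_congr rfl fun A _ => by rw [hco A]]
  exact main
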